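/- Let L be a first-order language, κ an infinite cardinal, M a κ-compact L-structure, and (I, ≤) a directed partial order of cardinality less than κ. Let (X i, u i j) be an ∅-definable directed system over I and (f i : X i → Y) a compatible family of ∅-definable maps to an ∅-definable set Y ⊆ (Fin m → M). Assume that the induced map on the colimit of points is injective, i.e. for every i and all x, x' ∈ X i with f i x = f i x' there exists j ≥ i with u i j x = u i j x'. Then for every i there exists j ≥ i such that for ALL x, x' ∈ X i, f i x = f i x' implies u i j x = u i j x'. -/

import Mathlib

open FirstOrder Cardinal

/-- An `L`-structure `M` is `κ`-compact if every set of fewer than `κ` formulas (in any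
variable index type) that is finitely realized in `M` is realized in `M`. -/
def KappaCompact (L : FirstOrder.Language.{0, 0}) (κ : Cardinal.{0}) (M : Type)
    [L.Structure M] : Prop :=
  ∀ (α : Type) (Φ : Set (L.Formula α)), #Φ < κ →
    (∀ Φ₀ : Set (L.Formula α), Φ₀ ⊆ Φ → Φ₀.Finite →
      ∃ v : α → M, ∀ φ ∈ Φ₀, φ.Realize v) →
    ∃ v : α → M, ∀ φ ∈ Φ, φ.Realize v

/-- A function `g` from a subset `X` of `Fin n → M` to `Fin m → M` is ∅-definable if its
graph is a ∅-definable subset of `(Fin n ⊕ Fin m) → M`. -/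
def DefinableFun (L : FirstOrder.Language.{0, 0}) (M : Type) [L.Structure M]
    {n m : ℕ} (X : Set (Fin n → M)) (g : (Fin n → M) → (Fin m → M)) : Prop :=
  Set.Definable (∅ : Set M) L
    {z : Fin n ⊕ Fin m → M | z ∘ Sum.inl ∈ X ∧ g (z ∘ Sum.inl) = z ∘ Sum.inr}

/-- A ∅-definable directed system of ∅-definable sets and ∅-definable maps,
indexed by a partial order `I`. -/
structure DefDirectedSystem (L : FirstOrder.Language.{0, 0}) (M : Type) [L.Structure M]
    (I : Type) [PartialOrder I] where
  n : I → ℕ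
  X : ∀ i, Set (Fin (n i) → M)
  X_def : ∀ i, Set.Definable (∅ : Set M) L (X i)
  u : ∀ i j, i ≤ j → (Fin (n i) → M) → (Fin (n j) → M)
  u_mem : ∀ i j (h : i ≤ j), ∀ x ∈ X i, u i j h x ∈ X j
  u_def : ∀ i j (h : i ≤ j), DefinableFun L M (X i) (u i j h)
  u_id : ∀ i, ∀ x ∈ X i, u i i le_rfl x = x
  u_comp : ∀ i j k (hij : i ≤ j) (hjk : j ≤ k), ∀ x ∈ X i,
    u j k hjk (u i j hij x) = u i k (hij.trans hjk) x

/-- For a ∅-definable function `g` on `X` there is a formula in two `n`-tuples of variables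
saying "both tuples are in `X` and their `g`-images agree". -/
lemma pair_formula {L : FirstOrder.Language.{0, 0}} {M : Type} [L.Structure M]
    {n p : ℕ} (X : Set (Fin n → M)) (g : (Fin n → M) → (Fin p → M))
    (hg : DefinableFun L M X g) :
    ∃ θ : L.Formula (Fin n ⊕ Fin n), ∀ x x' : Fin n → M,
      (θ.Realize (Sum.elim x x') ↔ (x ∈ X ∧ x' ∈ X ∧ g x = g x')) := by
  obtain ⟨φ, hφ⟩ := Set.empty_definable_iff.1 hg
  have hset : ∀ z : Fin n ⊕ Fin p → M,
      φ.Realize z ↔ (z ∘ Sum.inl ∈ X ∧ g (z ∘ Sum.inl) = z ∘ Sum.inr) := by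
    intro z
    have := Set.ext_iff.1 hφ z
    simpa [Set.mem_setOf_eq] using this.symm
  refine ⟨Language.Formula.iExs (Fin p)
    ((φ.relabel (Sum.map Sum.inl id)) ⊓ (φ.relabel (Sum.map Sum.inr id))), ?_⟩
  intro x x'
  rw [Language.Formula.realize_iExs]
  constructor
  · rintro ⟨y, hy⟩
    simp only [id_eq, Language.Formula.realize_inf, Language.Formula.realize_relabel] at hy
    obtain ⟨h1, h2⟩ := hy
    have e1 : ((fun a => Sum.elim (Sum.elim x x') y a) ∘ Sum.map Sum.inl id) = Sum.elim x y := by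
      funext a; rcases a with a | a <;> rfl
    have e2 : ((fun a => Sum.elim (Sum.elim x x') y a) ∘ Sum.map Sum.inr id) = Sum.elim x' y := by
      funext a; rcases a with a | a <;> rfl
    rw [e1, hset] at h1
    rw [e2, hset] at h2
    simp only [Sum.elim_comp_inl] at h1 h2
    refine ⟨h1.1, h2.1, ?_⟩
    have := h1.2.trans h2.2.symm
    exact this
  · rintro ⟨hx, hx', hgg⟩
    refine ⟨g x, ?_⟩
    simp only [id_eq, Language.Formula.realize_inf, Language.Formula.realize_relabel]
    have e1 : ((fun a => Sum.elim (Sum.elim x x') (g x) a) ∘ Sum.map Sum.inl id)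
        = Sum.elim x (g x) := by funext a; rcases a with a | a <;> rfl
    have e2 : ((fun a => Sum.elim (Sum.elim x x') (g x) a) ∘ Sum.map Sum.inr id)
        = Sum.elim x' (g x) := by funext a; rcases a with a | a <;> rfl
    rw [e1, e2, hset, hset]
    exact ⟨⟨by simpa using hx, by simp⟩, ⟨by simpa using hx', by simp [hgg]⟩⟩

theorem pointwise_injectivity_uniformizes
    (L : FirstOrder.Language.{0, 0}) (κ : Cardinal.{0}) (M : Type) [L.Structure M]
    (hκ : ℵ₀ ≤ κ) (hM : KappaCompact L κ M)
    (I : Type) [PartialOrder I] [IsDirected I (· ≤ ·)] (hI : #I < κ)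
    (S : DefDirectedSystem L M I)
    {m : ℕ} (Y : Set (Fin m → M)) (hY : Set.Definable (∅ : Set M) L Y)
    (f : ∀ i, (Fin (S.n i) → M) → (Fin m → M))
    (f_mem : ∀ i, ∀ x ∈ S.X i, f i x ∈ Y)
    (f_def : ∀ i, DefinableFun L M (S.X i) (f i))
    (f_compat : ∀ i j (h : i ≤ j), ∀ x ∈ S.X i, f j (S.u i j h x) = f i x)
    (hinj : ∀ i, ∀ x ∈ S.X i, ∀ x' ∈ S.X i, f i x = f i x' →
      ∃ j, ∃ h : i ≤ j, S.u i j h x = S.u i j h x') :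
    ∀ i, ∃ j, ∃ h : i ≤ j, ∀ x ∈ S.X i, ∀ x' ∈ S.X i,
      f i x = f i x' → S.u i j h x = S.u i j h x' := by
  classical
  intro i
  by_contra hcon
  push_neg at hcon
  -- hcon : ∀ j (h : i ≤ j), ∃ x ∈ S.X i, ∃ x' ∈ S.X i, f i x = f i x' ∧ u i j x ≠ u i j x'
  haveI : Nonempty I := ⟨i⟩
  obtain ⟨φX, hφX⟩ := Set.empty_definable_iff.1 (S.X_def i)
  have hX : ∀ x : Fin (S.n i) → M, x ∈ S.X i ↔ φX.Realize x := fun x => Set.ext_iff.1 hφX x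
  obtain ⟨θf, hθf⟩ := pair_formula (S.X i) (f i) (f_def i)
  choose θu hθu using fun j : {j // i ≤ j} => pair_formula (S.X i) (S.u i j.1 j.2) (S.u_def i j.1 j.2)
  set Neq : {j // i ≤ j} → L.Formula (Fin (S.n i) ⊕ Fin (S.n i)) := fun j => ∼(θu j) with hNeq
  set Φ : Set (L.Formula (Fin (S.n i) ⊕ Fin (S.n i))) :=
    insert (φX.relabel Sum.inl) (insert (φX.relabel Sum.inr) (insert θf (Set.range Neq))) with hΦ
  have hcard : #Φ < κ := by
    have h1 : #(Set.range Neq) ≤ #I :=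
      le_trans Cardinal.mk_range_le (Cardinal.mk_subtype_le _)
    have h2 : #Φ ≤ #(Set.range Neq) + 1 + 1 + 1 := by
      calc #Φ ≤ #(insert (φX.relabel Sum.inr) (insert θf (Set.range Neq)) : Set (L.Formula _)) + 1 :=
            Cardinal.mk_insert_le
        _ ≤ (#(insert θf (Set.range Neq) : Set (L.Formula (Fin (S.n i) ⊕ Fin (S.n i)))) + 1) + 1 :=
            add_le_add_left Cardinal.mk_insert_le 1
        _ ≤ ((#(Set.range Neq) + 1) + 1) + 1 := by
            exact add_le_add_left (add_le_add_left Cardinal.mk_insert_le 1) 1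
    have hone : (1 : Cardinal) < κ := lt_of_lt_of_le Cardinal.one_lt_aleph0 hκ
    have : #(Set.range Neq) + 1 + 1 + 1 < κ :=
      Cardinal.add_lt_of_lt hκ
        (Cardinal.add_lt_of_lt hκ
          (Cardinal.add_lt_of_lt hκ (lt_of_le_of_lt h1 hI) hone) hone) hone
    exact lt_of_le_of_lt h2 this
  have hfin : ∀ Φ₀ : Set (L.Formula (Fin (S.n i) ⊕ Fin (S.n i))), Φ₀ ⊆ Φ → Φ₀.Finite →
      ∃ v : (Fin (S.n i) ⊕ Fin (S.n i)) → M, ∀ φ ∈ Φ₀, φ.Realize v := by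
    intro Φ₀ hsub hΦ₀fin
    -- pick preimages of the Neq formulas
    have pick : ∀ φ : L.Formula (Fin (S.n i) ⊕ Fin (S.n i)), ∃ j : {j // i ≤ j}, φ ∈ Set.range Neq → Neq j = φ := by
      intro φ
      by_cases h : φ ∈ Set.range Neq
      · obtain ⟨j, hj⟩ := h
        exact ⟨j, fun _ => hj⟩
      · exact ⟨⟨i, le_rfl⟩, fun h' => absurd h' h⟩
    choose pk hpk using pick
    obtain ⟨k, hk⟩ := Finset.exists_le (insert i (hΦ₀fin.toFinset.image fun φ => (pk φ).1))
    have hik : i ≤ k := hk i (Finset.mem_insert_self _ _)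
    obtain ⟨x, hx, x', hx', hfe, hne⟩ := hcon k hik
    refine ⟨Sum.elim x x', ?_⟩
    intro φ hφ0
    have hφ := hsub hφ0
    rw [hΦ] at hφ
    rcases hφ with rfl | hφ
    · rw [Language.Formula.realize_relabel, Sum.elim_comp_inl]
      exact (hX x).1 hx
    rcases hφ with rfl | hφ
    · rw [Language.Formula.realize_relabel, Sum.elim_comp_inr]
      exact (hX x').1 hx'
    rcases hφ with rfl | hφ
    · exact (hθf x x').2 ⟨hx, hx', hfe⟩
    · -- φ ∈ range Neq
      have hφeq : Neq (pk φ) = φ := hpk φ hφ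
      rw [← hφeq]
      rw [hNeq]
      simp only [Language.Formula.realize_not]
      rw [hθu (pk φ) x x']
      rintro ⟨-, -, hequ⟩
      apply hne
      have hjk : (pk φ).1 ≤ k := by
        apply hk
        apply Finset.mem_insert_of_mem
        exact Finset.mem_image_of_mem _ (hΦ₀fin.mem_toFinset.2 hφ0)
      calc S.u i k hik x = S.u (pk φ).1 k hjk (S.u i (pk φ).1 (pk φ).2 x) :=
            (S.u_comp i (pk φ).1 k (pk φ).2 hjk x hx).symm
        _ = S.u (pk φ).1 k hjk (S.u i (pk φ).1 (pk φ).2 x') := by rw [hequ]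
        _ = S.u i k hik x' := S.u_comp i (pk φ).1 k (pk φ).2 hjk x' hx'
  obtain ⟨v, hv⟩ := hM (Fin (S.n i) ⊕ Fin (S.n i)) Φ hcard hfin
  set x : Fin (S.n i) → M := v ∘ Sum.inl with hxdef
  set x' : Fin (S.n i) → M := v ∘ Sum.inr with hx'def
  have hvel : Sum.elim x x' = v := by funext a; rcases a with a | a <;> rfl
  have hxX : x ∈ S.X i := by
    have := hv (φX.relabel Sum.inl) (by rw [hΦ]; exact Set.mem_insert _ _)
    rw [Language.Formula.realize_relabel] at this
    exact (hX x).2 this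
  have hx'X : x' ∈ S.X i := by
    have := hv (φX.relabel Sum.inr) (by rw [hΦ]; exact Set.mem_insert_of_mem _ (Set.mem_insert _ _))
    rw [Language.Formula.realize_relabel] at this
    exact (hX x').2 this
  have hfe : f i x = f i x' := by
    have := hv θf (by
      rw [hΦ]; exact Set.mem_insert_of_mem _ (Set.mem_insert_of_mem _ (Set.mem_insert _ _)))
    rw [← hvel] at this
    exact ((hθf x x').1 this).2.2
  obtain ⟨j, hj, hequ⟩ := hinj i x hxX x' hx'X hfe
  have := hv (Neq ⟨j, hj⟩) (by
    rw [hΦ]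
    exact Set.mem_insert_of_mem _ (Set.mem_insert_of_mem _ (Set.mem_insert_of_mem _
      (Set.mem_range_self _))))
  rw [← hvel, hNeq] at this
  simp only [Language.Formula.realize_not] at this
  exact this ((hθu ⟨j, hj⟩ x x').2 ⟨hxX, hx'X, hequ⟩)
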